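/- Let (V, ω) be a 4-dimensional symplectic vector space and j a complex structure on V (j² = -id) with ω(jX, jY) = -ω(X,Y) for all X, Y. Define θ(X,Y) = ω(jX,Y). Then θ is an alternating 2-form satisfying θ ∧ ω = 0 and θ ∧ θ = ω ∧ ω. Conversely, if θ ∈ Λ²V* satisfies θ ∧ ω = 0 and θ ∧ θ = ω ∧ ω, then the endomorphism j defined by ω(jX,Y) = θ(X,Y) satisfies j² = -id. -/

import Mathlib

open scoped TensorProduct

variable {V : Type*} [AddCommGroup V] [Module ℝ V]

noncomputable def wedgeF {k l : ℕ} (f : V [⋀^Fin k]→ₗ[ℝ] ℝ) (g : V [⋀^Fin l]→ₗ[ℝ] ℝ) :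
    V [⋀^Fin (k + l)]→ₗ[ℝ] ℝ :=
  ((TensorProduct.lid ℝ ℝ).toLinearMap.compAlternatingMap (f.domCoprod g)).domDomCongr
    finSumFinEquiv

noncomputable def wpowF (ω : V [⋀^Fin 2]→ₗ[ℝ] ℝ) : (n : ℕ) → V [⋀^Fin (2 * n)]→ₗ[ℝ] ℝ
  | 0 => AlternatingMap.constOfIsEmpty ℝ V (Fin 0) 1
  | n + 1 => wedgeF (wpowF ω n) ω

noncomputable def oneAlt (α : Module.Dual ℝ V) : V [⋀^Fin 1]→ₗ[ℝ] ℝ :=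
  AlternatingMap.ofSubsingleton ℝ V ℝ 0 α

noncomputable def bilinToAlt (B : V →ₗ[ℝ] V →ₗ[ℝ] ℝ) (hB : ∀ x, B x x = 0) :
    V [⋀^Fin 2]→ₗ[ℝ] ℝ where
  toFun v := B (v 0) (v 1)
  map_update_add' := by
    intro _ v i x y
    fin_cases i <;> simp
  map_update_smul' := by
    intro _ v i c x
    fin_cases i <;> simp
  map_eq_zero_of_eq' := by
    intro v i j hij hne
    have h01 : v 0 = v 1 := by
      fin_cases i <;> fin_cases j <;> simp_all
    show B (v 0) (v 1) = 0
    rw [h01]; exact hB _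

variable {L : Type*} [LieRing L] [LieAlgebra ℝ L]

noncomputable def ceD (α : Module.Dual ℝ L) : L [⋀^Fin 2]→ₗ[ℝ] ℝ :=
  bilinToAlt
    (LinearMap.mk₂ ℝ (fun x y => -α ⁅x, y⁆)
      (fun x x' y => by simp [add_lie]; exact add_comm _ _)
      (fun c x y => by simp [smul_lie])
      (fun x y y' => by simp [lie_add]; exact add_comm _ _)
      (fun c x y => by simp [lie_smul]))
    (fun x => by simp)

/-- closedness of a 2-cochain under the Chevalley–Eilenberg differential -/
def IsCEClosed (ω : L [⋀^Fin 2]→ₗ[ℝ] ℝ) : Prop :=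
  ∀ x y z : L, ω ![⁅x, y⁆, z] - ω ![⁅x, z⁆, y] + ω ![⁅y, z⁆, x] = 0


open scoped Matrix

/-! ### Auxiliary machinery for `stmt15` -/

section Stmt15Aux

open scoped Matrix

set_option linter.unusedSectionVars false

lemma myvec2_eta (v : Fin 2 → V) : ![v 0, v 1] = v := by
  funext i; fin_cases i <;> rfl

lemma myvec_comp_swap (x y : V) : ![x, y] ∘ Equiv.swap 0 1 = ![y, x] := by
  funext i; fin_cases i <;> simp [Equiv.swap_apply_def]

lemma alt2_swap (f : V [⋀^Fin 2]→ₗ[ℝ] ℝ) (x y : V) : f ![y, x] = -f ![x, y] := by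
  rw [← myvec_comp_swap x y, AlternatingMap.map_swap]
  decide

lemma myupd0 (z x y : V) : Function.update ![z, y] 0 x = ![x, y] := by
  funext i; fin_cases i <;> simp

lemma myupd1 (z x y : V) : Function.update ![x, z] 1 y = ![x, y] := by
  funext i; fin_cases i <;> simp

noncomputable def alt2Bilin (f : V [⋀^Fin 2]→ₗ[ℝ] ℝ) : V →ₗ[ℝ] V →ₗ[ℝ] ℝ :=
  LinearMap.mk₂ ℝ (fun x y => f ![x, y])
    (fun x x' y => by
      rw [← myupd0 x x y, ← myupd0 x x' y, ← myupd0 x (x + x') y, f.map_update_add])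
    (fun c x y => by
      rw [← myupd0 x x y, ← myupd0 x (c • x) y, f.map_update_smul])
    (fun x y y' => by
      rw [← myupd1 y x y, ← myupd1 y x y', ← myupd1 y x (y + y'), f.map_update_add])
    (fun c x y => by
      rw [← myupd1 y x y, ← myupd1 y x (c • y), f.map_update_smul])

lemma alt2Bilin_apply (f : V [⋀^Fin 2]→ₗ[ℝ] ℝ) (x y : V) : alt2Bilin f x y = f ![x, y] := rfl

lemma alt2_neg_left (f : V [⋀^Fin 2]→ₗ[ℝ] ℝ) (x y : V) : f ![-x, y] = -f ![x, y] := by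
  rw [← alt2Bilin_apply, ← alt2Bilin_apply, map_neg, LinearMap.neg_apply]

open Equiv in
lemma sum24V (F G : V → V → ℝ) (v : Fin 4 → V) :
    ∑ σ : Equiv.Perm (Fin 4),
      (Equiv.Perm.sign σ : ℤ) • (F (v (σ 0)) (v (σ 1)) * G (v (σ 2)) (v (σ 3))) =
      F (v 0) (v 1) * G (v 2) (v 3)
      - F (v 0) (v 1) * G (v 3) (v 2)
      - F (v 0) (v 2) * G (v 1) (v 3)
      + F (v 0) (v 2) * G (v 3) (v 1)
      + F (v 0) (v 3) * G (v 1) (v 2)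
      - F (v 0) (v 3) * G (v 2) (v 1)
      - F (v 1) (v 0) * G (v 2) (v 3)
      + F (v 1) (v 0) * G (v 3) (v 2)
      + F (v 1) (v 2) * G (v 0) (v 3)
      - F (v 1) (v 2) * G (v 3) (v 0)
      - F (v 1) (v 3) * G (v 0) (v 2)
      + F (v 1) (v 3) * G (v 2) (v 0)
      + F (v 2) (v 0) * G (v 1) (v 3)
      - F (v 2) (v 0) * G (v 3) (v 1)
      - F (v 2) (v 1) * G (v 0) (v 3)
      + F (v 2) (v 1) * G (v 3) (v 0)
      + F (v 2) (v 3) * G (v 0) (v 1)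
      - F (v 2) (v 3) * G (v 1) (v 0)
      - F (v 3) (v 0) * G (v 1) (v 2)
      + F (v 3) (v 0) * G (v 2) (v 1)
      + F (v 3) (v 1) * G (v 0) (v 2)
      - F (v 3) (v 1) * G (v 2) (v 0)
      - F (v 3) (v 2) * G (v 0) (v 1)
      + F (v 3) (v 2) * G (v 1) (v 0) := by
  have h1 : (1 : Fin 4) = Fin.succ 0 := rfl
  have h2 : (2 : Fin 4) = Fin.succ 1 := rfl
  have h3 : (3 : Fin 4) = Fin.succ 2 := rfl
  have g1 : (1 : Fin 3) = Fin.succ 0 := rfl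
  have g2 : (2 : Fin 3) = Fin.succ 1 := rfl
  have k1 : (1 : Fin 2) = Fin.succ 0 := rfl
  simp only [h1, h2, h3]
  simp only [Finset.univ_perm_fin_succ, Finset.sum_map, Fintype.sum_prod_type,
    Equiv.toEmbedding_apply, Fin.sum_univ_succ, Equiv.Perm.decomposeFin.symm_sign,
    Equiv.Perm.decomposeFin_symm_apply_zero, Equiv.Perm.decomposeFin_symm_apply_succ,
    g1, g2, k1,
    Finset.univ_unique, Finset.sum_singleton, Finset.sum_empty, Fin.sum_univ_zero]
  simp (config := { decide := true }) only [Fin.isValue, Equiv.swap_apply_def,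
    show (Fin.succ 2 : Fin 4) = 3 from rfl, show (Fin.succ 1 : Fin 4) = 2 from rfl,
    show (Fin.succ 0 : Fin 4) = 1 from rfl, show (Fin.succ 1 : Fin 3) = 2 from rfl,
    show (Fin.succ 0 : Fin 3) = 1 from rfl, show (Fin.succ 0 : Fin 2) = 1 from rfl,
    if_true, if_false]
  simp only [Fin.fin_one_eq_zero,
    show Fin.succ (1:Fin 2) = (2:Fin 3) from rfl, show Fin.succ (0:Fin 2) = (1:Fin 3) from rfl,
    show Fin.succ (0:Fin 1) = (1:Fin 2) from rfl, show (Fin.succ 2 : Fin 4) = 3 from rfl,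
    show (Fin.succ 1 : Fin 4) = 2 from rfl, show (Fin.succ 0 : Fin 4) = 1 from rfl,
    show (Fin.succ 1 : Fin 3) = 2 from rfl, show (Fin.succ 0 : Fin 3) = 1 from rfl]
  norm_num [show Equiv.Perm.sign (default : Equiv.Perm (Fin 1)) = 1 from rfl, smul_eq_mul]
  ring

lemma four_mul_wedgeF (f g : V [⋀^Fin 2]→ₗ[ℝ] ℝ) (v : Fin 4 → V) :
    (4 : ℝ) * wedgeF f g v =
    ∑ σ : Equiv.Perm (Fin 4),
      (Equiv.Perm.sign σ : ℤ) • (f ![v (σ 0), v (σ 1)] * g ![v (σ 2), v (σ 3)]) := by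
  have key := MultilinearMap.domCoprod_alternization_eq f g
  set L : (ℝ ⊗[ℝ] ℝ) →ₗ[ℝ] ℝ := (TensorProduct.lid ℝ ℝ).toLinearMap with hL
  set w : Fin 2 ⊕ Fin 2 → V := v ∘ finSumFinEquiv with hw
  have h1 : wedgeF f g v = L ((f.domCoprod g) w) := rfl
  have h2 : (4 : ℝ) • ((f.domCoprod g) w) =
      (MultilinearMap.alternatization
        (MultilinearMap.domCoprod (f : MultilinearMap ℝ (fun _ : Fin 2 => V) ℝ) g)) w := by
    rw [key]
    have hc : ((Fintype.card (Fin 2)).factorial * (Fintype.card (Fin 2)).factorial) = 4 := by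
      norm_num
    rw [hc]
    rw [AlternatingMap.smul_apply]
    exact_mod_cast Nat.cast_smul_eq_nsmul ℝ 4 ((f.domCoprod g) w)
  calc (4 : ℝ) * wedgeF f g v
      = L ((4:ℝ) • ((f.domCoprod g) w)) := by rw [map_smul, h1, smul_eq_mul]
    _ = L ((MultilinearMap.alternatization
        (MultilinearMap.domCoprod (f : MultilinearMap ℝ (fun _ : Fin 2 => V) ℝ) g)) w) := by
        rw [h2]
    _ = ∑ σ : Equiv.Perm (Fin 2 ⊕ Fin 2),
          (Equiv.Perm.sign σ : ℤ) •
            L ((MultilinearMap.domDomCongr σ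
              (MultilinearMap.domCoprod (f : MultilinearMap ℝ (fun _ : Fin 2 => V) ℝ) g)) w) := by
        rw [MultilinearMap.alternatization_apply, map_sum]
        refine Finset.sum_congr rfl fun σ _ => ?_
        rw [Units.smul_def, map_zsmul]
    _ = ∑ τ : Equiv.Perm (Fin 4),
          (Equiv.Perm.sign τ : ℤ) • (f ![v (τ 0), v (τ 1)] * g ![v (τ 2), v (τ 3)]) := by
        refine Fintype.sum_equiv (Equiv.permCongr finSumFinEquiv) _ _ fun σ => ?_
        rw [Equiv.Perm.sign_permCongr]
        congr 1
        simp only [MultilinearMap.domDomCongr_apply, MultilinearMap.domCoprod_apply,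
          AlternatingMap.coe_multilinearMap, hL, LinearEquiv.coe_coe, TensorProduct.lid_tmul,
          smul_eq_mul]
        have es : ∀ x : Fin 4, (Equiv.permCongr finSumFinEquiv σ) x
            = (finSumFinEquiv : Fin 2 ⊕ Fin 2 ≃ Fin 4)
              (σ ((finSumFinEquiv : Fin 2 ⊕ Fin 2 ≃ Fin 4).symm x)) :=
          fun x => Equiv.permCongr_apply _ _ _
        have s0 : (finSumFinEquiv : Fin 2 ⊕ Fin 2 ≃ Fin 4).symm 0 = Sum.inl 0 := by decide
        have s1 : (finSumFinEquiv : Fin 2 ⊕ Fin 2 ≃ Fin 4).symm 1 = Sum.inl 1 := by decide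
        have s2 : (finSumFinEquiv : Fin 2 ⊕ Fin 2 ≃ Fin 4).symm 2 = Sum.inr 0 := by decide
        have s3 : (finSumFinEquiv : Fin 2 ⊕ Fin 2 ≃ Fin 4).symm 3 = Sum.inr 1 := by decide
        rw [es 0, es 1, es 2, es 3, s0, s1, s2, s3]
        congr 1
        · congr 1
          rw [← myvec2_eta (fun i => w (σ (Sum.inl i)))]
          simp [hw]
        · congr 1
          rw [← myvec2_eta (fun i => w (σ (Sum.inr i)))]
          simp [hw]

lemma wedgeF_apply (f g : V [⋀^Fin 2]→ₗ[ℝ] ℝ) (v : Fin 4 → V) :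
    wedgeF f g v =
      f ![v 0, v 1] * g ![v 2, v 3] - f ![v 0, v 2] * g ![v 1, v 3]
      + f ![v 0, v 3] * g ![v 1, v 2] + f ![v 1, v 2] * g ![v 0, v 3]
      - f ![v 1, v 3] * g ![v 0, v 2] + f ![v 2, v 3] * g ![v 0, v 1] := by
  have h := four_mul_wedgeF f g v
  rw [sum24V (fun x y => f ![x, y]) (fun x y => g ![x, y]) v] at h
  simp only [alt2_swap f (v 0) (v 1), alt2_swap f (v 0) (v 2), alt2_swap f (v 0) (v 3),
    alt2_swap f (v 1) (v 2), alt2_swap f (v 1) (v 3), alt2_swap f (v 2) (v 3),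
    alt2_swap g (v 0) (v 1), alt2_swap g (v 0) (v 2), alt2_swap g (v 0) (v 3),
    alt2_swap g (v 1) (v 2), alt2_swap g (v 1) (v 3), alt2_swap g (v 2) (v 3)] at h
  linarith

def pf4 (A : Matrix (Fin 4) (Fin 4) ℝ) : ℝ :=
  A 0 1 * A 2 3 - A 0 2 * A 1 3 + A 0 3 * A 1 2

def pair4 (A B : Matrix (Fin 4) (Fin 4) ℝ) : ℝ :=
  A 0 1 * B 2 3 - A 0 2 * B 1 3 + A 0 3 * B 1 2 + A 2 3 * B 0 1 - A 1 3 * B 0 2 + A 1 2 * B 0 3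

def star4 (B : Matrix (Fin 4) (Fin 4) ℝ) : Matrix (Fin 4) (Fin 4) ℝ :=
  !![0, B 2 3, -B 1 3, B 1 2;
     -B 2 3, 0, B 0 3, -B 0 2;
     B 1 3, -B 0 3, 0, B 0 1;
     -B 1 2, B 0 2, -B 0 1, 0]

lemma skew_entry {A : Matrix (Fin 4) (Fin 4) ℝ} (hA : Aᵀ = -A) (i j : Fin 4) :
    A j i = -A i j := by
  have := congrFun (congrFun hA j) i
  simp only [Matrix.transpose_apply, Matrix.neg_apply] at this
  linarith

lemma skew_diag {A : Matrix (Fin 4) (Fin 4) ℝ} (hA : Aᵀ = -A) (i : Fin 4) : A i i = 0 := by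
  have := skew_entry hA i i; linarith

lemma K1 (A B : Matrix (Fin 4) (Fin 4) ℝ) (hA : Aᵀ = -A) (hB : Bᵀ = -B) :
    A * star4 B * A = (-pair4 A B) • A + pf4 A • B := by
  ext i j
  fin_cases i <;> fin_cases j <;>
    simp [Matrix.mul_apply, Fin.sum_univ_four, star4, pf4, pair4,
      skew_entry hA 0 1, skew_entry hA 0 2, skew_entry hA 0 3,
      skew_entry hA 1 2, skew_entry hA 1 3, skew_entry hA 2 3,
      skew_entry hB 0 1, skew_entry hB 0 2, skew_entry hB 0 3,
      skew_entry hB 1 2, skew_entry hB 1 3, skew_entry hB 2 3,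
      skew_diag hA, skew_diag hB] <;> ring

lemma K2 (B : Matrix (Fin 4) (Fin 4) ℝ) (hB : Bᵀ = -B) :
    B * star4 B = (-pf4 B) • 1 := by
  ext i j
  fin_cases i <;> fin_cases j <;>
    simp [Matrix.mul_apply, Fin.sum_univ_four, star4, pf4, Matrix.one_apply,
      skew_entry hB 0 1, skew_entry hB 0 2, skew_entry hB 0 3,
      skew_entry hB 1 2, skew_entry hB 1 3, skew_entry hB 2 3,
      skew_diag hB] <;> ring

noncomputable def matOf (b : Module.Basis (Fin 4) ℝ V) (f : V [⋀^Fin 2]→ₗ[ℝ] ℝ) :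
    Matrix (Fin 4) (Fin 4) ℝ :=
  Matrix.of fun i k => f ![b i, b k]

lemma matOf_apply (b : Module.Basis (Fin 4) ℝ V) (f : V [⋀^Fin 2]→ₗ[ℝ] ℝ) (i k : Fin 4) :
    matOf b f i k = f ![b i, b k] := rfl

lemma matOf_skew (b : Module.Basis (Fin 4) ℝ V) (f : V [⋀^Fin 2]→ₗ[ℝ] ℝ) :
    (matOf b f)ᵀ = -(matOf b f) := by
  ext i k
  simp only [Matrix.transpose_apply, Matrix.neg_apply, matOf_apply]
  exact alt2_swap f (b i) (b k)

lemma alt2_expand_left (b : Module.Basis (Fin 4) ℝ V) (f : V [⋀^Fin 2]→ₗ[ℝ] ℝ) (u x : V) :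
    f ![u, x] = ∑ k, b.repr u k * f ![b k, x] := by
  conv_lhs => rw [← alt2Bilin_apply, ← Module.Basis.sum_repr b u]
  rw [map_sum, LinearMap.sum_apply]
  refine Finset.sum_congr rfl fun k _ => ?_
  rw [map_smul, LinearMap.smul_apply, alt2Bilin_apply, smul_eq_mul]

lemma alt2_expand_right (b : Module.Basis (Fin 4) ℝ V) (f : V [⋀^Fin 2]→ₗ[ℝ] ℝ) (u x : V) :
    f ![x, u] = ∑ k, b.repr u k * f ![x, b k] := by
  conv_lhs => rw [← alt2Bilin_apply, ← Module.Basis.sum_repr b u]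
  rw [map_sum]
  refine Finset.sum_congr rfl fun k _ => ?_
  rw [map_smul, alt2Bilin_apply, smul_eq_mul]

lemma jexpand (b : Module.Basis (Fin 4) ℝ V) (j : V →ₗ[ℝ] V) (f : V [⋀^Fin 2]→ₗ[ℝ] ℝ)
    (x : V) (i : Fin 4) :
    f ![j (b i), x] = ∑ k, LinearMap.toMatrix b b j k i * f ![b k, x] := by
  rw [alt2_expand_left b f (j (b i)) x]
  refine Finset.sum_congr rfl fun k _ => ?_
  rw [LinearMap.toMatrix_apply]

lemma jexpand' (b : Module.Basis (Fin 4) ℝ V) (j : V →ₗ[ℝ] V) (f : V [⋀^Fin 2]→ₗ[ℝ] ℝ)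
    (x : V) (i : Fin 4) :
    f ![x, j (b i)] = ∑ k, LinearMap.toMatrix b b j k i * f ![x, b k] := by
  rw [alt2_expand_right b f (j (b i)) x]
  refine Finset.sum_congr rfl fun k _ => ?_
  rw [LinearMap.toMatrix_apply]

lemma pair4_self (A : Matrix (Fin 4) (Fin 4) ℝ) : pair4 A A = 2 * pf4 A := by
  simp only [pair4, pf4]; ring

lemma pf4_zero : pf4 (0 : Matrix (Fin 4) (Fin 4) ℝ) = 0 := by
  simp [pf4]

end Stmt15Aux


/-- correspondence between anticompatible complex structures and 2-forms θ
with θ∧ω = 0 and θ∧θ = ω∧ω on a 4-dimensional symplectic vector space. -/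
theorem stmt15 [FiniteDimensional ℝ V] (h4 : Module.finrank ℝ V = 4)
    (ω : V [⋀^Fin 2]→ₗ[ℝ] ℝ) (hω : wedgeF ω ω ≠ 0) :
    (∀ j : V →ₗ[ℝ] V, (∀ X, j (j X) = -X) →
      (∀ X Y, ω ![j X, j Y] = -ω ![X, Y]) →
      (∀ X, ω ![j X, X] = 0) ∧
      (∀ θ : V [⋀^Fin 2]→ₗ[ℝ] ℝ, (∀ X Y, θ ![X, Y] = ω ![j X, Y]) →
        wedgeF θ ω = 0 ∧ wedgeF θ θ = wedgeF ω ω)) ∧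
    (∀ θ : V [⋀^Fin 2]→ₗ[ℝ] ℝ, wedgeF θ ω = 0 → wedgeF θ θ = wedgeF ω ω →
      ∀ j : V →ₗ[ℝ] V, (∀ X Y, ω ![j X, Y] = θ ![X, Y]) → ∀ X, j (j X) = -X) := by
  classical
  have b : Module.Basis (Fin 4) ℝ V := Module.finBasisOfFinrankEq ℝ V h4
  have Ωs := matOf_skew b ω
  set Ω := matOf b ω with hΩdef
  have wval : ∀ f g : V [⋀^Fin 2]→ₗ[ℝ] ℝ,
      wedgeF f g (⇑b) = pair4 (matOf b f) (matOf b g) := by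
    intro f g
    rw [wedgeF_apply f g ⇑b]
    simp only [pair4, matOf_apply]
    ring
  have hpf : pf4 Ω ≠ 0 := by
    intro h0
    apply hω
    rw [← AlternatingMap.map_basis_eq_zero_iff b, wval ω ω, pair4_self, h0]
    ring
  constructor
  · -- forward direction
    intro j hj2 hjac
    have hfirst : ∀ X, ω ![j X, X] = 0 := by
      intro X
      have h1 := hjac (j X) X
      rw [hj2 X] at h1
      have h2 := alt2_neg_left ω X (j X)
      have h3 := alt2_swap ω (j X) X
      linarith
    refine ⟨hfirst, ?_⟩
    intro θ hθ
    set J := LinearMap.toMatrix b b j with hJdef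
    have Θs := matOf_skew b θ
    set Θ := matOf b θ with hΘdef
    have hJO : ∀ i m : Fin 4, (Jᵀ * Ω) i m = ω ![j (b i), b m] := by
      intro i m
      rw [Matrix.mul_apply, jexpand b j ω (b m) i]
      refine Finset.sum_congr rfl fun k _ => ?_
      rw [Matrix.transpose_apply]
      rfl
    have hJΩ : Jᵀ * Ω = Θ := by
      ext i m
      rw [hJO i m]
      exact (hθ (b i) (b m)).symm
    have hanti : Jᵀ * Ω * J = -Ω := by
      ext i m
      have e1 : (Jᵀ * Ω * J) i m = ∑ k, J k m * ω ![j (b i), b k] := by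
        rw [Matrix.mul_apply]
        refine Finset.sum_congr rfl fun k _ => ?_
        rw [hJO i k]; ring
      have e2 : ω ![j (b i), j (b m)] = ∑ k, J k m * ω ![j (b i), b k] :=
        jexpand' b j ω (j (b i)) m
      rw [e1, ← e2, hjac (b i) (b m)]
      rfl
    have hJJ : J * J = -1 := by
      have hcomp : j ∘ₗ j = -LinearMap.id := by
        ext X; simp [hj2 X]
      rw [hJdef, ← LinearMap.toMatrix_comp b b b, hcomp, map_neg, LinearMap.toMatrix_id]
    have hJJt : Jᵀ * Jᵀ = -1 := by
      have h := congrArg Matrix.transpose hJJ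
      rw [Matrix.transpose_mul] at h
      simpa using h
    have hTmain : Θ * star4 Ω * Θ = pf4 Ω • Ω := by
      rw [← hJΩ]
      calc Jᵀ * Ω * star4 Ω * (Jᵀ * Ω)
          = Jᵀ * (Ω * star4 Ω) * (Jᵀ * Ω) := by rw [Matrix.mul_assoc Jᵀ Ω (star4 Ω)]
        _ = Jᵀ * ((-pf4 Ω) • 1) * (Jᵀ * Ω) := by rw [K2 Ω Ωs]
        _ = (-pf4 Ω) • (Jᵀ * Jᵀ * Ω) := by
            rw [Matrix.mul_smul, Matrix.mul_one, Matrix.smul_mul, Matrix.mul_assoc]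
        _ = pf4 Ω • Ω := by rw [hJJt]; simp
    have hkey : pair4 Θ Ω • Θ = (pf4 Θ - pf4 Ω) • Ω := by
      have hK := K1 Θ Ω Θs Ωs
      rw [hTmain] at hK
      rw [sub_smul, hK]
      module
    by_cases hc : pair4 Θ Ω = 0
    · have hpfeq : pf4 Θ = pf4 Ω := by
        rw [hc, zero_smul] at hkey
        rcases smul_eq_zero.mp hkey.symm with h | h
        · linarith
        · exact absurd (by rw [h]; exact pf4_zero) hpf
      constructor
      · rw [← AlternatingMap.map_basis_eq_zero_iff b, wval θ ω]
        exact hc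
      · rw [← sub_eq_zero, ← AlternatingMap.map_basis_eq_zero_iff b,
          AlternatingMap.sub_apply, wval θ θ, wval ω ω, pair4_self, pair4_self, hpfeq]
        ring
    · exfalso
      set μ := (pair4 Θ Ω)⁻¹ * (pf4 Θ - pf4 Ω) with hμdef
      have hμ : Θ = μ • Ω := by
        have h := congrArg (fun M => (pair4 Θ Ω)⁻¹ • M) hkey
        simpa [smul_smul, inv_mul_cancel₀ hc, hμdef] using h
      have hJt : Jᵀ = μ • 1 := by
        have h1 : (Jᵀ * Ω) * star4 Ω = (μ • Ω) * star4 Ω := by rw [hJΩ, hμ]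
        rw [Matrix.mul_assoc, K2 Ω Ωs, Matrix.smul_mul, K2 Ω Ωs,
          Matrix.mul_smul, Matrix.mul_one, smul_comm] at h1
        exact smul_right_injective _ (neg_ne_zero.mpr hpf) h1
      have hsq : Jᵀ * Jᵀ = (μ * μ) • 1 := by
        rw [hJt, Matrix.smul_mul, Matrix.mul_smul, Matrix.mul_one, smul_smul]
      rw [hJJt] at hsq
      have h00 := congrFun (congrFun hsq 0) 0
      simp [Matrix.one_apply, Matrix.neg_apply, Matrix.smul_apply] at h00
      nlinarith [h00, sq_nonneg μ]
  · -- converse direction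
    intro θ hw1 hw2 j hθ X
    set J := LinearMap.toMatrix b b j with hJdef
    have Θs := matOf_skew b θ
    set Θ := matOf b θ with hΘdef
    have hJO : ∀ i m : Fin 4, (Jᵀ * Ω) i m = ω ![j (b i), b m] := by
      intro i m
      rw [Matrix.mul_apply, jexpand b j ω (b m) i]
      refine Finset.sum_congr rfl fun k _ => ?_
      rw [Matrix.transpose_apply]
      rfl
    have hJΩ : Jᵀ * Ω = Θ := by
      ext i m
      rw [hJO i m]
      exact hθ (b i) (b m)
    have hpair : pair4 Θ Ω = 0 := by
      have h := congrArg (fun F : V [⋀^Fin (2 + 2)]→ₗ[ℝ] ℝ => F ⇑b) hw1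
      simp only [AlternatingMap.zero_apply] at h
      rw [wval θ ω] at h
      exact h
    have hpfeq : pf4 Θ = pf4 Ω := by
      have h := congrArg (fun F : V [⋀^Fin (2 + 2)]→ₗ[ℝ] ℝ => F ⇑b) hw2
      have h : wedgeF θ θ ⇑b = wedgeF ω ω ⇑b := h
      rw [wval θ θ, wval ω ω, pair4_self, pair4_self] at h
      linarith
    have hTmain : Θ * star4 Ω * Θ = pf4 Ω • Ω := by
      rw [K1 Θ Ω Θs Ωs, hpair, hpfeq]
      simp
    have hmid : (-pf4 Ω) • (Jᵀ * Jᵀ * Ω) = pf4 Ω • Ω := by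
      calc (-pf4 Ω) • (Jᵀ * Jᵀ * Ω)
          = Jᵀ * ((-pf4 Ω) • 1) * (Jᵀ * Ω) := by
            rw [Matrix.mul_smul, Matrix.mul_one, Matrix.smul_mul, Matrix.mul_assoc]
        _ = Jᵀ * (Ω * star4 Ω) * (Jᵀ * Ω) := by rw [K2 Ω Ωs]
        _ = Jᵀ * Ω * star4 Ω * (Jᵀ * Ω) := by rw [Matrix.mul_assoc Jᵀ Ω (star4 Ω)]
        _ = Θ * star4 Ω * Θ := by rw [hJΩ]
        _ = pf4 Ω • Ω := hTmain
    have hJJtΩ : Jᵀ * Jᵀ * Ω = -Ω := by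
      have h2 : (-pf4 Ω) • (Jᵀ * Jᵀ * Ω) = (-pf4 Ω) • (-Ω) := by
        rw [hmid]; simp
      exact smul_right_injective _ (neg_ne_zero.mpr hpf) h2
    have hJJt : Jᵀ * Jᵀ = -1 := by
      have h3 : (Jᵀ * Jᵀ) * (Ω * star4 Ω) = (-Ω) * star4 Ω := by
        rw [← Matrix.mul_assoc, hJJtΩ]
      rw [K2 Ω Ωs, Matrix.neg_mul, K2 Ω Ωs] at h3
      rw [Matrix.mul_smul, Matrix.mul_one] at h3
      have h4 : (-pf4 Ω) • (Jᵀ * Jᵀ) = (-pf4 Ω) • (-1 : Matrix (Fin 4) (Fin 4) ℝ) := by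
        rw [h3]; simp
      exact smul_right_injective _ (neg_ne_zero.mpr hpf) h4
    have hJJ : J * J = -1 := by
      have h := congrArg Matrix.transpose hJJt
      rw [Matrix.transpose_mul, Matrix.transpose_transpose] at h
      simpa using h
    have hcomp : j ∘ₗ j = -LinearMap.id := by
      apply (LinearMap.toMatrix b b).injective
      rw [LinearMap.toMatrix_comp b b b, map_neg, LinearMap.toMatrix_id, ← hJdef, hJJ]
    have h := LinearMap.ext_iff.mp hcomp X
    simpa using h
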